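/- The generalized principal eigenvalue λ_p(ℬ^μ + 𝒞) is Lipschitz continuous in the death rate μ: for μ₁, μ₂ ∈ C(Ω̄, L^∞_+(0,a₂)), |λ_p(ℬ^{μ₁}+𝒞) − λ_p(ℬ^{μ₂}+𝒞)| ≤ ‖μ₁−μ₂‖_{C(Ω̄, L^∞(0,a₂))}. -/
import Mathlib


open MeasureTheory

/-- The set of test values defining the generalized principal eigenvalue
`λ_p(ℬ^μ + 𝒞) = sup{λ : ∃ φ > 0 with (-𝒜+λ)(0,φ) ≤ 0}`. -/
def lamPTestSet {N : ℕ} (Ω : Set (EuclideanSpace ℝ (Fin N)))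
    (J : EuclideanSpace ℝ (Fin N) → ℝ) (a₂ D : ℝ)
    (β μ : ℝ → EuclideanSpace ℝ (Fin N) → ℝ) : Set ℝ :=
  {lam : ℝ | ∃ φ φ' : ℝ → EuclideanSpace ℝ (Fin N) → ℝ,
    (∀ a ∈ Set.Icc (0:ℝ) a₂, ∀ x ∈ closure Ω, 0 < φ a x) ∧
    (∀ x ∈ closure Ω, ∀ a ∈ Set.Icc (0:ℝ) a₂,
      HasDerivAt (fun t => φ t x) (φ' a x) a) ∧
    (∀ a ∈ Set.Icc (0:ℝ) a₂, ∀ x ∈ closure Ω,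
      φ' a x - D * ((∫ y in Ω, J (x - y) * φ a y) - φ a x) + μ a x * φ a x +
        lam * φ a x ≤ 0) ∧
    (∀ x ∈ closure Ω, φ 0 x ≤ ∫ a in Set.Ioc (0:ℝ) a₂, β a x * φ a x)}

/-- Shifting a test value: if `ν - μ ≤ C` pointwise on `[0,a₂] × Ω̄` and
`lam ∈ lamPTestSet` for `μ`, then `lam - C ∈ lamPTestSet` for `ν`. -/
lemma lamPTestSet_shift {N : ℕ} {Ω : Set (EuclideanSpace ℝ (Fin N))}
    {J : EuclideanSpace ℝ (Fin N) → ℝ} {a₂ D : ℝ}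
    {β μ ν : ℝ → EuclideanSpace ℝ (Fin N) → ℝ} {C : ℝ}
    (hC : ∀ a ∈ Set.Icc (0:ℝ) a₂, ∀ x ∈ closure Ω, ν a x - μ a x ≤ C)
    {lam : ℝ} (hlam : lam ∈ lamPTestSet Ω J a₂ D β μ) :
    lam - C ∈ lamPTestSet Ω J a₂ D β ν := by
  obtain ⟨φ, φ', hpos, hderiv, hineq, hbdy⟩ := hlam
  refine ⟨φ, φ', hpos, hderiv, ?_, hbdy⟩
  intro a ha x hx
  have h1 := hineq a ha x hx
  have h2 : (ν a x - μ a x - C) * φ a x ≤ 0 :=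
    mul_nonpos_of_nonpos_of_nonneg (by linarith [hC a ha x hx]) (hpos a ha x hx).le
  nlinarith [hpos a ha x hx]

/-- Lipschitz continuity of the generalized principal eigenvalue in the death rate:
if `|μ₁ - μ₂| ≤ C` on `[0,a₂] × Ω̄`, then `|λ_p(ℬ^{μ₁}+𝒞) - λ_p(ℬ^{μ₂}+𝒞)| ≤ C`;
in particular `λ_p` is `1`-Lipschitz for the `C(Ω̄, L^∞(0,a₂))` norm. -/
theorem stmt_17 {N : ℕ}
    (Ω : Set (EuclideanSpace ℝ (Fin N))) (hΩne : Ω.Nonempty)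
    (J : EuclideanSpace ℝ (Fin N) → ℝ) (hJnn : ∀ z, 0 ≤ J z)
    (a₂ D : ℝ) (ha₂ : 0 < a₂) (hD : 0 < D)
    (β μ₁ μ₂ : ℝ → EuclideanSpace ℝ (Fin N) → ℝ)
    (C : ℝ)
    (hC : ∀ a ∈ Set.Icc (0:ℝ) a₂, ∀ x ∈ closure Ω, |μ₁ a x - μ₂ a x| ≤ C)
    (h1ne : (lamPTestSet Ω J a₂ D β μ₁).Nonempty)
    (h1bdd : BddAbove (lamPTestSet Ω J a₂ D β μ₁))
    (h2ne : (lamPTestSet Ω J a₂ D β μ₂).Nonempty)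
    (h2bdd : BddAbove (lamPTestSet Ω J a₂ D β μ₂)) :
    |sSup (lamPTestSet Ω J a₂ D β μ₁) - sSup (lamPTestSet Ω J a₂ D β μ₂)| ≤ C := by
  have h12 : ∀ a ∈ Set.Icc (0:ℝ) a₂, ∀ x ∈ closure Ω, μ₁ a x - μ₂ a x ≤ C :=
    fun a ha x hx => (abs_le.mp (hC a ha x hx)).2
  have h21 : ∀ a ∈ Set.Icc (0:ℝ) a₂, ∀ x ∈ closure Ω, μ₂ a x - μ₁ a x ≤ C :=
    fun a ha x hx => by linarith [(abs_le.mp (hC a ha x hx)).1]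
  have key : ∀ (μ ν : ℝ → EuclideanSpace ℝ (Fin N) → ℝ),
      (∀ a ∈ Set.Icc (0:ℝ) a₂, ∀ x ∈ closure Ω, ν a x - μ a x ≤ C) →
      (lamPTestSet Ω J a₂ D β μ).Nonempty →
      BddAbove (lamPTestSet Ω J a₂ D β ν) →
      sSup (lamPTestSet Ω J a₂ D β μ) - sSup (lamPTestSet Ω J a₂ D β ν) ≤ C := by
    intro μ ν hμν hne hbdd
    rw [sub_le_iff_le_add]
    refine csSup_le hne (fun lam hlam => ?_)
    have := le_csSup hbdd (lamPTestSet_shift hμν hlam)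
    linarith
  rw [abs_sub_le_iff]
  exact ⟨key μ₁ μ₂ h21 h1ne h2bdd, key μ₂ μ₁ h12 h2ne h1bdd⟩
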